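/- arXiv:1805.10842 — 3 statements merged into one kernel-verified Lean document; each statement's English description precedes it below -/
import Mathlib

section
/- In the setting of the rank-one Kronecker approximation with m = 2: let C = A₁ ⊗ B₁ + A₂ ⊗ B₂, c₁, c₂ independent uniform signs, p₁, p₂ > 0, A' = c₁p₁A₁ + c₂p₂A₂, B' = c₁(1/p₁)B₁ + c₂(1/p₂)B₂. With the choice p_i = √(‖B_i‖/‖A_i‖) (assuming A_i, B_i nonzero), the variance of A' ⊗ B' equals 2(‖A₁‖‖A₂‖‖B₁‖‖B₂‖ + ⟨A₁,A₂⟩⟨B₁,B₂⟩). -/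
open scoped Kronecker

/-- Frobenius norm squared. -/
noncomputable def frobSq {α β : Type*} [Fintype α] [Fintype β] (M : Matrix α β ℝ) : ℝ := ∑ i, ∑ j, (M i j) ^ 2

/-- Frobenius norm. -/
noncomputable def fnorm {α β : Type*} [Fintype α] [Fintype β] (M : Matrix α β ℝ) : ℝ := Real.sqrt (frobSq M)

/-- Frobenius inner product. -/
def finner {α β : Type*} [Fintype α] [Fintype β] (M N : Matrix α β ℝ) : ℝ := ∑ i, ∑ j, M i j * N i j

/-- Rademacher sign associated to a boolean. -/
def sgn (b : Bool) : ℝ := if b then 1 else -1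

open Matrix

section helpers
variable {α β γ δ : Type*} [Fintype α] [Fintype β] [Fintype γ] [Fintype δ]

lemma finner_self (M : Matrix α β ℝ) : finner M M = frobSq M := by
  simp [finner, frobSq, sq]

lemma finner_comm (M N : Matrix α β ℝ) : finner M N = finner N M := by
  simp [finner, mul_comm]

lemma finner_add_left (M N P : Matrix α β ℝ) : finner (M + N) P = finner M P + finner N P := by
  simp [finner, add_mul, Finset.sum_add_distrib]

lemma finner_add_right (M N P : Matrix α β ℝ) : finner M (N + P) = finner M N + finner M P := by
  simp [finner, mul_add, Finset.sum_add_distrib]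

lemma finner_smul_left (r : ℝ) (M N : Matrix α β ℝ) : finner (r • M) N = r * finner M N := by
  simp [finner, Finset.mul_sum, mul_assoc]

lemma finner_smul_right (r : ℝ) (M N : Matrix α β ℝ) : finner M (r • N) = r * finner M N := by
  rw [finner_comm, finner_smul_left, finner_comm]

lemma finner_eq_trace (M N : Matrix α β ℝ) : finner M N = (Mᵀ * N).trace := by
  simp only [Matrix.trace, Matrix.diag, Matrix.mul_apply, Matrix.transpose_apply, finner]
  exact Finset.sum_comm

lemma finner_kron (A : Matrix α β ℝ) (B : Matrix γ δ ℝ) (C : Matrix α β ℝ) (D : Matrix γ δ ℝ) :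
    finner (A ⊗ₖ B) (C ⊗ₖ D) = finner A C * finner B D := by
  rw [finner_eq_trace, finner_eq_trace, finner_eq_trace]
  rw [show (A ⊗ₖ B)ᵀ = Aᵀ ⊗ₖ Bᵀ from Matrix.kroneckerMap_transpose _ _ _,
    ← Matrix.mul_kronecker_mul, Matrix.trace_kronecker]

lemma frobSq_nonneg (M : Matrix α β ℝ) : 0 ≤ frobSq M :=
  Finset.sum_nonneg fun _ _ => Finset.sum_nonneg fun _ _ => sq_nonneg _

lemma frobSq_pos {M : Matrix α β ℝ} (h : M ≠ 0) : 0 < frobSq M := by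
  obtain ⟨i, j, hij⟩ : ∃ i j, M i j ≠ 0 := by
    by_contra hc; push_neg at hc
    exact h (by ext i j; simpa using hc i j)
  have h1 : (M i j) ^ 2 ≤ ∑ jj, (M i jj) ^ 2 :=
    Finset.single_le_sum (f := fun jj => (M i jj) ^ 2) (fun _ _ => sq_nonneg _) (Finset.mem_univ j)
  have h2 : ∑ jj, (M i jj) ^ 2 ≤ frobSq M :=
    Finset.single_le_sum (f := fun ii => ∑ jj, (M ii jj) ^ 2) (fun ii _ => Finset.sum_nonneg fun _ _ => sq_nonneg _) (Finset.mem_univ i)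
  have : (0:ℝ) < (M i j) ^ 2 := by positivity
  linarith

lemma fnorm_pos {M : Matrix α β ℝ} (h : M ≠ 0) : 0 < fnorm M :=
  Real.sqrt_pos.mpr (frobSq_pos h)

lemma sq_fnorm (M : Matrix α β ℝ) : fnorm M ^ 2 = frobSq M :=
  Real.sq_sqrt (frobSq_nonneg M)

end helpers


set_option maxHeartbeats 1000000 in
/-- Variance of the rank-one Kronecker approximation with `m = 2` and the optimal choice
`p_i = √(‖B_i‖/‖A_i‖)`: `Var[A' ⊗ B'] = 2(‖A₁‖‖A₂‖‖B₁‖‖B₂‖ + ⟨A₁,A₂⟩⟨B₁,B₂⟩)`.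
Expectations over the two independent uniform signs are realized as averages over the
four sign patterns. -/
theorem stmt2 {a b c d : ℕ} (A₁ A₂ : Matrix (Fin a) (Fin b) ℝ)
    (B₁ B₂ : Matrix (Fin c) (Fin d) ℝ)
    (hA₁ : A₁ ≠ 0) (hA₂ : A₂ ≠ 0) (hB₁ : B₁ ≠ 0) (hB₂ : B₂ ≠ 0) :
    let p₁ := Real.sqrt (fnorm B₁ / fnorm A₁)
    let p₂ := Real.sqrt (fnorm B₂ / fnorm A₂)
    let C' : Bool → Bool → Matrix (Fin a × Fin c) (Fin b × Fin d) ℝ := fun s₁ s₂ =>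
      ((sgn s₁ * p₁) • A₁ + (sgn s₂ * p₂) • A₂) ⊗ₖ ((sgn s₁ / p₁) • B₁ + (sgn s₂ / p₂) • B₂)
    ((1 / 4 : ℝ) * ∑ s₁ : Bool, ∑ s₂ : Bool, frobSq (C' s₁ s₂))
        - frobSq ((1 / 4 : ℝ) • ∑ s₁ : Bool, ∑ s₂ : Bool, C' s₁ s₂)
      = 2 * (fnorm A₁ * fnorm A₂ * fnorm B₁ * fnorm B₂ + finner A₁ A₂ * finner B₁ B₂) := by
  intro p₁ p₂ C'
  have hA1 : 0 < fnorm A₁ := fnorm_pos hA₁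
  have hA2 : 0 < fnorm A₂ := fnorm_pos hA₂
  have hB1 : 0 < fnorm B₁ := fnorm_pos hB₁
  have hB2 : 0 < fnorm B₂ := fnorm_pos hB₂
  have hp1 : p₁ ^ 2 = fnorm B₁ / fnorm A₁ := Real.sq_sqrt (by positivity)
  have hp2 : p₂ ^ 2 = fnorm B₂ / fnorm A₂ := Real.sq_sqrt (by positivity)
  have hp1pos : 0 < p₁ := Real.sqrt_pos.mpr (by positivity)
  have hp2pos : 0 < p₂ := Real.sqrt_pos.mpr (by positivity)
  have hb1 : fnorm B₁ = p₁ ^ 2 * fnorm A₁ := by rw [hp1]; field_simp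
  have hb2 : fnorm B₂ = p₂ ^ 2 * fnorm A₂ := by rw [hp2]; field_simp
  have eA1 : finner A₁ A₁ = fnorm A₁ ^ 2 := by rw [finner_self, sq_fnorm]
  have eA2 : finner A₂ A₂ = fnorm A₂ ^ 2 := by rw [finner_self, sq_fnorm]
  have eB1 : finner B₁ B₁ = (p₁ ^ 2 * fnorm A₁) ^ 2 := by rw [finner_self, ← sq_fnorm, hb1]
  have eB2 : finner B₂ B₂ = (p₂ ^ 2 * fnorm A₂) ^ 2 := by rw [finner_self, ← sq_fnorm, hb2]
  simp only [C', Fintype.sum_bool, sgn, if_true, Bool.false_eq_true, if_false, ← finner_self]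
  simp only [finner_add_left, finner_add_right, finner_smul_left, finner_smul_right,
    finner_kron, Matrix.add_kronecker, Matrix.kronecker_add, Matrix.smul_kronecker,
    Matrix.kronecker_smul]
  rw [finner_comm A₂ A₁, finner_comm B₂ B₁]
  rw [eA1, eA2, eB1, eB2, hb1, hb2]
  field_simp
  ring
end

section
/- Let ε ∈ (0,1) and C₁, C₂ > 0. Suppose sequences of nonnegative reals (a_t), (b_t) satisfy a₀ b₀ = 0 and for all t ≥ 1: a_t ≤ √(m_t · a_{t−1}) + √(C₁C₂) and b_t ≤ √(m_t · a_{t−1}) + √(C₁C₂), where m_t ≤ (1−ε) b_{t−1}. Then a_t b_t ≤ 4C₁C₂/ε² for all t ≥ 0. -/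
/-- Claim 2 of the paper, abstracted: with `a₀b₀ = 0`,
`a_t, b_t ≤ √(m_t a_{t−1}) + √(C₁C₂)` and `m_t ≤ (1−ε) b_{t−1}`, it follows that
`a_t b_t ≤ 4C₁C₂/ε²` for all `t`. -/
theorem stmt10 (ε C₁ C₂ : ℝ) (hε : ε ∈ Set.Ioo (0 : ℝ) 1) (hC₁ : 0 < C₁) (hC₂ : 0 < C₂)
    (a b m : ℕ → ℝ) (ha : ∀ t, 0 ≤ a t) (hb : ∀ t, 0 ≤ b t) (hm : ∀ t, 0 ≤ m t)
    (h0 : a 0 * b 0 = 0)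
    (hma : ∀ t : ℕ, 1 ≤ t → m t ≤ (1 - ε) * b (t - 1))
    (hat : ∀ t : ℕ, 1 ≤ t → a t ≤ Real.sqrt (m t * a (t - 1)) + Real.sqrt (C₁ * C₂))
    (hbt : ∀ t : ℕ, 1 ≤ t → b t ≤ Real.sqrt (m t * a (t - 1)) + Real.sqrt (C₁ * C₂)) :
    ∀ t, a t * b t ≤ 4 * C₁ * C₂ / ε ^ 2 := by
  obtain ⟨hε0, hε1⟩ := hε
  set K := Real.sqrt (C₁ * C₂) with hK
  have hKpos : 0 < K := Real.sqrt_pos.mpr (by positivity)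
  have hK2 : K ^ 2 = C₁ * C₂ := Real.sq_sqrt (by positivity)
  intro t
  induction t with
  | zero => rw [h0]; positivity
  | succ n ih =>
    -- key: √(m (n+1) * a n) ≤ 2K/ε - K
    have hsq : Real.sqrt (m (n + 1) * a n) ≤ (1 - ε / 2) * (2 * K / ε) := by
      have h1 : m (n + 1) * a n ≤ (1 - ε) * (b n * a n) := by
        have := hma (n + 1) (Nat.le_add_left 1 n)
        simp only [Nat.add_sub_cancel] at this
        have := mul_le_mul_of_nonneg_right this (ha n)
        linarith [mul_assoc (1 - ε) (b n) (a n)]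
      have h2 : (1 - ε) * (b n * a n) ≤ (1 - ε) * (4 * C₁ * C₂ / ε ^ 2) := by
        apply mul_le_mul_of_nonneg_left _ (by linarith)
        calc b n * a n = a n * b n := mul_comm _ _
        _ ≤ _ := ih
      have h3 : (1 - ε) * (4 * C₁ * C₂ / ε ^ 2) ≤ ((1 - ε / 2) * (2 * K / ε)) ^ 2 := by
        have heq : ((1 - ε / 2) * (2 * K / ε)) ^ 2 = (1 - ε / 2) ^ 2 * (4 * (C₁ * C₂) / ε ^ 2) := by
          rw [mul_pow, div_pow, mul_pow, hK2]; ring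
        rw [heq]
        have h4 : (1 - ε) ≤ (1 - ε / 2) ^ 2 := by nlinarith
        have h5 : (0:ℝ) ≤ 4 * (C₁ * C₂) / ε ^ 2 := by positivity
        have h6 : 4 * C₁ * C₂ / ε ^ 2 = 4 * (C₁ * C₂) / ε ^ 2 := by ring
        rw [h6]
        exact mul_le_mul_of_nonneg_right h4 h5
      calc Real.sqrt (m (n + 1) * a n) ≤ Real.sqrt (((1 - ε / 2) * (2 * K / ε)) ^ 2) :=
            Real.sqrt_le_sqrt (by linarith)
        _ = (1 - ε / 2) * (2 * K / ε) := Real.sqrt_sq (mul_nonneg (by linarith) (by positivity))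
    have hkey : (1 - ε / 2) * (2 * K / ε) + K = 2 * K / ε := by field_simp; ring
    have hA : a (n + 1) ≤ 2 * K / ε := by
      have := hat (n + 1) (Nat.le_add_left 1 n)
      simp only [Nat.add_sub_cancel] at this
      linarith
    have hB : b (n + 1) ≤ 2 * K / ε := by
      have := hbt (n + 1) (Nat.le_add_left 1 n)
      simp only [Nat.add_sub_cancel] at this
      linarith
    have : a (n + 1) * b (n + 1) ≤ (2 * K / ε) * (2 * K / ε) :=
      mul_le_mul hA hB (hb _) (by positivity)
    calc a (n + 1) * b (n + 1) ≤ (2 * K / ε) * (2 * K / ε) := this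
      _ = 4 * C₁ * C₂ / ε ^ 2 := by field_simp; nlinarith [hK2]
end

section
/- Under the setup of the KF-RTRL recursion: if E[u_{t−1} ⊗ A_{t−1}] = G_{t−1} and G_t = H_t G_{t−1} + ĥ_t ⊗ D_t, with u_t = c₁p₁u_{t−1} + c₂p₂ĥ_t and A_t = c₁(1/p₁)H_t A_{t−1} + c₂(1/p₂)D_t, where c₁, c₂ are independent uniform signs independent of (u_{t−1}, A_{t−1}) and p₁, p₂ > 0 are deterministic, then E[u_t ⊗ A_t] = G_t. -/
open MeasureTheory

/-- Kronecker product of a row vector `u ∈ ℝ^{1×p}` with a matrix `A ∈ ℝ^{n×r}`,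
identified with an `n×(pr)` matrix (the first dimension of `u` is `1`). -/
def rowKron {p n r : ℕ} (u : Fin p → ℝ) (A : Matrix (Fin n) (Fin r) ℝ) :
    Matrix (Fin n) (Fin p × Fin r) ℝ :=
  Matrix.of fun i ab => u ab.1 * A i ab.2

/-- Unbiasedness of the KF-RTRL recursion step: if `E[u_{t−1} ⊗ A_{t−1}] = G_{t−1}` and
`G_t = H_t G_{t−1} + ĥ_t ⊗ D_t`, then with `c₁, c₂` independent uniform signs independent
of `(u_{t−1}, A_{t−1})` (expectation realized as the average over the four sign patterns
on the product space), `E[u_t ⊗ A_t] = G_t`, where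
`u_t = c₁p₁u_{t−1} + c₂p₂ĥ_t` and `A_t = c₁(1/p₁)H_tA_{t−1} + c₂(1/p₂)D_t`. -/
theorem stmt16 {Ω : Type*} [MeasurableSpace Ω] (μ : Measure Ω) [IsProbabilityMeasure μ]
    {p n r : ℕ} (u : Ω → Fin p → ℝ) (A : Ω → Matrix (Fin n) (Fin r) ℝ)
    (Gprev Gt : Matrix (Fin n) (Fin p × Fin r) ℝ)
    (H : Matrix (Fin n) (Fin n) ℝ) (hh : Fin p → ℝ) (D : Matrix (Fin n) (Fin r) ℝ)
    (p₁ p₂ : ℝ) (hp₁ : 0 < p₁) (hp₂ : 0 < p₂)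
    (hint_u : ∀ a, Integrable (fun ω => u ω a) μ)
    (hint_A : ∀ i b, Integrable (fun ω => A ω i b) μ)
    (hint_uA : ∀ (i : Fin n) (ab : Fin p × Fin r), Integrable (fun ω => u ω ab.1 * A ω i ab.2) μ)
    (hint_uHA : ∀ (i : Fin n) (ab : Fin p × Fin r),
      Integrable (fun ω => u ω ab.1 * (H * A ω) i ab.2) μ)
    (hprev : ∀ (i : Fin n) (ab : Fin p × Fin r), (∫ ω, rowKron (u ω) (A ω) i ab ∂μ) = Gprev i ab)
    (hGt : Gt = H * Gprev + rowKron hh D) :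
    ∀ (i : Fin n) (ab : Fin p × Fin r),
      (∫ ω, (1 / 4 : ℝ) * ∑ c₁ : Bool, ∑ c₂ : Bool,
          rowKron (fun a => sgn c₁ * p₁ * u ω a + sgn c₂ * p₂ * hh a)
            ((sgn c₁ / p₁) • (H * A ω) + (sgn c₂ / p₂) • D) i ab ∂μ)
        = Gt i ab := by
  intro i ab
  have hstep : ∀ ω, (1 / 4 : ℝ) * ∑ c₁ : Bool, ∑ c₂ : Bool,
      rowKron (fun a => sgn c₁ * p₁ * u ω a + sgn c₂ * p₂ * hh a)
        ((sgn c₁ / p₁) • (H * A ω) + (sgn c₂ / p₂) • D) i ab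
      = u ω ab.1 * (H * A ω) i ab.2 + hh ab.1 * D i ab.2 := by
    intro ω
    simp only [Fintype.sum_bool, rowKron, sgn, Matrix.add_apply, Matrix.smul_apply,
      Matrix.of_apply, if_true, Bool.false_eq_true, if_false, smul_eq_mul]
    field_simp
    ring
  rw [integral_congr_ae (Filter.Eventually.of_forall hstep)]
  have hint_c : Integrable (fun _ : Ω => hh ab.1 * D i ab.2) μ := integrable_const _
  rw [integral_add (by simpa using (hint_uHA i ab)) hint_c]
  have h1 : (∫ ω, u ω ab.1 * (H * A ω) i ab.2 ∂μ) = (H * Gprev) i ab := by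
    have : ∀ ω, u ω ab.1 * (H * A ω) i ab.2 = ∑ j, H i j * (u ω ab.1 * A ω j ab.2) := by
      intro ω
      rw [Matrix.mul_apply, Finset.mul_sum]
      exact Finset.sum_congr rfl fun j _ => by ring
    rw [integral_congr_ae (Filter.Eventually.of_forall this),
      integral_finset_sum _ (fun j _ => (hint_uA j ab).const_mul (H i j))]
    rw [Matrix.mul_apply]
    refine Finset.sum_congr rfl fun j _ => ?_
    rw [integral_const_mul, ← hprev j ab]
    rfl
  rw [h1, integral_const, probReal_univ, one_smul, hGt]
  simp [rowKron, Matrix.add_apply]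
end
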